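/- Let X be an n×n matrix over a commutative ring and let A, B ⊆ {1,…,n}. Then Σ_{U ⊇ A, W ⊇ B} (−1)^{|W̃|} X{U|W} = Σ_{V ⊆ B} X{A|Ṽ}, where on the left U and W range over subsets of {1,…,n} containing A and B respectively, on the right V ranges over subsets of B, and W̃, Ṽ denote complements in {1,…,n}. -/

import Mathlib

open Finset

/-- The minor `X(A|B)`: the determinant of the submatrix of `X` with row indices in `A` and
column indices in `B`, taken in increasing order; `0` if `|A| ≠ |B|`. -/
def minorM {m n : ℕ} {R : Type*} [CommRing R]
    (X : Matrix (Fin m) (Fin n) R) (A : Finset (Fin m)) (B : Finset (Fin n)) : R :=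
  if h : A.card = B.card then
    (Matrix.of fun i j : Fin A.card =>
      X (A.orderEmbOfFin rfl i) (B.orderEmbOfFin h.symm j)).det
  else 0

/-- The Laplace product `X{A|B} = (-1)^(ΣA+ΣB) X(A|B) X(Ã|B̃)`, where elements of
`Fin n` are counted as the numbers `1,…,n` (so `i : Fin n` counts as `i+1`). -/
def lap {n : ℕ} {R : Type*} [CommRing R]
    (X : Matrix (Fin n) (Fin n) R) (A B : Finset (Fin n)) : R :=
  (-1 : R) ^ (∑ i ∈ A, ((i : ℕ) + 1) + ∑ j ∈ B, ((j : ℕ) + 1)) *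
    (minorM X A B * minorM X Aᶜ Bᶜ)

/-- The partial order `S ≤ T` on finite subsets of a linearly ordered set:
writing `S = {s₁<⋯<s_p}` and `T = {t₁<⋯<t_q}`, it means `p ≥ q` and `s_ν ≤ t_ν` for `ν ≤ q`. -/
def domLE {α : Type*} [LinearOrder α] (S T : Finset α) : Prop :=
  T.card ≤ S.card ∧ ∀ (ν : ℕ) (hT : ν < (T.sort (· ≤ ·)).length)
    (hS : ν < (S.sort (· ≤ ·)).length),
    (S.sort (· ≤ ·))[ν] ≤ (T.sort (· ≤ ·))[ν]

/-- A subset `S ⊆ {1,…,n}` is good if `S ≤ S̃` where `S̃` is the complement of `S`. -/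
def goodSet {n : ℕ} (S : Finset (Fin n)) : Prop := domLE S Sᶜ

/-- The generic `m×n` matrix, whose entries are the indeterminates `x_{ij}`. -/
noncomputable def genX (m n : ℕ) (R : Type*) [CommRing R] :
    Matrix (Fin m) (Fin n) (MvPolynomial (Fin m × Fin n) R) :=
  Matrix.of fun i j => MvPolynomial.X (i, j)

section Aux
variable {n : ℕ}

private lemma swapStep_left {u v : Fin n} (huv : (v : ℕ) + 1 = (u : ℕ))
    {U U' : Finset (Fin n)} (hu : u ∈ U) (hv : v ∉ U) (hU' : U' = insert v (U.erase u))
    {k : ℕ} (hk : U.card = k) (hk' : U'.card = k) (i : Fin k) :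
    Equiv.swap v u (U'.orderEmbOfFin hk' i) = U.orderEmbOfFin hk i := by
  have hne : v ≠ u := fun h => by rw [h] at huv; omega
  have huU' : u ∉ U' := by
    rw [hU']; simp [Finset.mem_insert, Ne.symm hne]
  have key : ∀ x ∈ U', Equiv.swap v u x ∈ U := by
    intro x hx
    rw [hU'] at hx
    rcases Finset.mem_insert.1 hx with h | h
    · rw [h, Equiv.swap_apply_left]; exact hu
    · rw [Equiv.swap_apply_of_ne_of_ne
        (fun hh => hv (by rw [← hh]; exact Finset.mem_of_mem_erase h)) (Finset.ne_of_mem_erase h)]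
      exact Finset.mem_of_mem_erase h
  have keymono : ∀ x ∈ U', ∀ y ∈ U', x < y → Equiv.swap v u x < Equiv.swap v u y := by
    intro x hx y hy hxy
    have hxu : x ≠ u := fun h => huU' (h ▸ hx)
    have hyu : y ≠ u := fun h => huU' (h ▸ hy)
    have h1 : (x : ℕ) < (y : ℕ) := hxy
    rcases eq_or_ne x v with rfl | hxv
    · rw [Equiv.swap_apply_left, Equiv.swap_apply_of_ne_of_ne (ne_of_gt hxy) hyu]
      have h2 : (y : ℕ) ≠ (u : ℕ) := fun h => hyu (Fin.ext h)
      rw [Fin.lt_def]; omega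
    · rcases eq_or_ne y v with rfl | hyv
      · rw [Equiv.swap_apply_left, Equiv.swap_apply_of_ne_of_ne hxv hxu]
        rw [Fin.lt_def]; omega
      · rw [Equiv.swap_apply_of_ne_of_ne hxv hxu, Equiv.swap_apply_of_ne_of_ne hyv hyu]
        exact hxy
  have hfs : ∀ j : Fin k, Equiv.swap v u (U'.orderEmbOfFin hk' j) ∈ U :=
    fun j => key _ (Finset.orderEmbOfFin_mem U' hk' j)
  have hmono : StrictMono (fun j : Fin k => Equiv.swap v u (U'.orderEmbOfFin hk' j)) :=
    fun i j hij => keymono _ (Finset.orderEmbOfFin_mem U' hk' i) _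
      (Finset.orderEmbOfFin_mem U' hk' j) ((U'.orderEmbOfFin hk').strictMono hij)
  exact congrFun (Finset.orderEmbOfFin_unique hk hfs hmono) i

private lemma swapStep_right {u v : Fin n} (huv : (v : ℕ) + 1 = (u : ℕ))
    {S S' : Finset (Fin n)} (hv : v ∈ S) (hu : u ∉ S) (hS' : S' = insert u (S.erase v))
    {l : ℕ} (hl : S.card = l) (hl' : S'.card = l) (j : Fin l) :
    Equiv.swap v u (S'.orderEmbOfFin hl' j) = S.orderEmbOfFin hl j := by
  have hne : v ≠ u := fun h => by rw [h] at huv; omega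
  have hvS' : v ∉ S' := by
    rw [hS']; simp [Finset.mem_insert, hne]
  have key : ∀ x ∈ S', Equiv.swap v u x ∈ S := by
    intro x hx
    rw [hS'] at hx
    rcases Finset.mem_insert.1 hx with h | h
    · rw [h, Equiv.swap_apply_right]; exact hv
    · rw [Equiv.swap_apply_of_ne_of_ne (Finset.ne_of_mem_erase h)
        (fun hh => hu (by rw [← hh]; exact Finset.mem_of_mem_erase h))]
      exact Finset.mem_of_mem_erase h
  have keymono : ∀ x ∈ S', ∀ y ∈ S', x < y → Equiv.swap v u x < Equiv.swap v u y := by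
    intro x hx y hy hxy
    have hxv : x ≠ v := fun h => hvS' (h ▸ hx)
    have hyv : y ≠ v := fun h => hvS' (h ▸ hy)
    have h1 : (x : ℕ) < (y : ℕ) := hxy
    rcases eq_or_ne x u with rfl | hxu
    · rw [Equiv.swap_apply_right, Equiv.swap_apply_of_ne_of_ne hyv (ne_of_gt hxy)]
      rw [Fin.lt_def]; omega
    · rcases eq_or_ne y u with rfl | hyu
      · rw [Equiv.swap_apply_right, Equiv.swap_apply_of_ne_of_ne hxv hxu]
        have h2 : (x : ℕ) ≠ (v : ℕ) := fun h => hxv (Fin.ext h)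
        rw [Fin.lt_def]; omega
      · rw [Equiv.swap_apply_of_ne_of_ne hxv hxu, Equiv.swap_apply_of_ne_of_ne hyv hyu]
        exact hxy
  have hfs : ∀ j : Fin l, Equiv.swap v u (S'.orderEmbOfFin hl' j) ∈ S :=
    fun j => key _ (Finset.orderEmbOfFin_mem S' hl' j)
  have hmono : StrictMono (fun j : Fin l => Equiv.swap v u (S'.orderEmbOfFin hl' j)) :=
    fun i j hij => keymono _ (Finset.orderEmbOfFin_mem S' hl' i) _
      (Finset.orderEmbOfFin_mem S' hl' j) ((S'.orderEmbOfFin hl').strictMono hij)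
  exact congrFun (Finset.orderEmbOfFin_unique hl hfs hmono) j

end Aux
section Aux2
open Equiv
variable {n : ℕ}

private lemma complStep {u v : Fin n} (huv : (v : ℕ) + 1 = (u : ℕ))
    {U : Finset (Fin n)} (hu : u ∈ U) (hv : v ∉ U) :
    (insert v (U.erase u))ᶜ = insert u (Uᶜ.erase v) := by
  have hne : v ≠ u := fun h => by rw [h] at huv; omega
  ext x
  simp only [Finset.mem_compl, Finset.mem_insert, Finset.mem_erase, ne_eq]
  constructor
  · intro hx
    by_cases hxu : x = u
    · exact Or.inl hxu
    · exact Or.inr ⟨fun hxv => hx (Or.inl hxv), fun hxU => hx (Or.inr ⟨hxu, hxU⟩)⟩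
  · rintro (rfl | ⟨hxv, hxU⟩) h
    · rcases h with h | h
      · exact hne h.symm
      · exact h.1 rfl
    · rcases h with h | h
      · exact hxv h
      · exact hxU h.2

private lemma eqvStep {u v : Fin n} (huv : (v : ℕ) + 1 = (u : ℕ))
    {U U' : Finset (Fin n)} (hu : u ∈ U) (hv : v ∉ U) (hU' : U' = insert v (U.erase u))
    {k l : ℕ} (hk : U.card = k) (hl : Uᶜ.card = l) (hk' : U'.card = k) (hl' : U'ᶜ.card = l) :
    finSumEquivOfFinset hk hl = (finSumEquivOfFinset hk' hl').trans (Equiv.swap v u) := by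
  apply Equiv.ext
  rintro (i | j) <;>
    simp only [Equiv.trans_apply, finSumEquivOfFinset_inl, finSumEquivOfFinset_inr]
  · exact (swapStep_left huv hu hv hU' hk hk' i).symm
  · refine (swapStep_right huv (Finset.mem_compl.2 hv) (fun h => Finset.mem_compl.1 h hu)
      ?_ hl hl' j).symm
    rw [hU']; exact complStep huv hu hv

private lemma noStep_eq_filter {U : Finset (Fin n)}
    (h : ∀ u ∈ U, ∀ v : Fin n, (v : ℕ) + 1 = (u : ℕ) → v ∈ U) :
    U = Finset.univ.filter (fun i : Fin n => (i : ℕ) < U.card) := by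
  have hdc : ∀ d : ℕ, ∀ u ∈ U, ∀ w : Fin n, (w : ℕ) + d = (u : ℕ) → w ∈ U := by
    intro d
    induction d with
    | zero => intro u hu w hw; have : w = u := Fin.ext (by omega); rwa [this]
    | succ d ih =>
      intro u hu w hw
      have hlt : (w : ℕ) + d < n := by have := u.isLt; omega
      have hv : (⟨(w : ℕ) + d, hlt⟩ : Fin n) ∈ U := h u hu _ (by simp; omega)
      exact ih _ hv w rfl
  ext i
  simp only [Finset.mem_filter, Finset.mem_univ, true_and]
  constructor
  · intro hi
    have hcard : (i : ℕ) + 1 ≤ U.card := by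
      have := Finset.card_le_card_of_injOn
        (fun j : ℕ => if hj : j < n then (⟨j, hj⟩ : Fin n) else i)
        (s := Finset.range ((i : ℕ) + 1)) (t := U) ?_ ?_
      · simpa using this
      · intro j hj
        simp only [Finset.mem_coe, Finset.mem_range] at hj
        have hjn : j < n := lt_of_le_of_lt (by omega) i.isLt
        beta_reduce
        rw [dif_pos hjn]
        exact hdc ((i : ℕ) - j) i hi _ (by simp; omega)
      · intro a ha b hb hab
        simp only [Finset.mem_range, Finset.mem_coe] at ha hb
        have han : a < n := lt_of_le_of_lt (by omega) i.isLt
        have hbn : b < n := lt_of_le_of_lt (by omega) i.isLt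
        beta_reduce at hab
        rw [dif_pos han, dif_pos hbn] at hab
        simpa using congrArg Fin.val hab
    omega
  · intro hi
    by_contra hni
    have hall : ∀ u ∈ U, (u : ℕ) < (i : ℕ) := by
      intro u hu
      by_contra hge
      exact hni (hdc ((u : ℕ) - (i : ℕ)) u hu i (by omega))
    have : U.card ≤ (i : ℕ) := by
      have := Finset.card_le_card_of_injOn (fun u : Fin n => (u : ℕ))
        (s := U) (t := Finset.range (i : ℕ)) ?_ ?_
      · simpa using this
      · intro u hu; simp only [Finset.mem_coe, Finset.mem_range]; exact hall u hu
      · intro a _ b _ hab; exact Fin.ext hab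
    omega

private lemma signLemma {k l : ℕ} (N : ℕ) :
    ∀ (U W : Finset (Fin n)) (hUk : U.card = k) (hUl : Uᶜ.card = l)
      (hWk : W.card = k) (hWl : Wᶜ.card = l),
      (∑ i ∈ U, (i : ℕ)) + (∑ j ∈ W, (j : ℕ)) ≤ N →
      Equiv.Perm.sign ((finSumEquivOfFinset hWk hWl).symm.trans (finSumEquivOfFinset hUk hUl))
        = (-1) ^ ((∑ i ∈ U, (i : ℕ)) + (∑ j ∈ W, (j : ℕ))) := by
  have step : ∀ (U : Finset (Fin n)), (∃ u ∈ U, ∃ v : Fin n, (v : ℕ) + 1 = (u : ℕ) ∧ v ∉ U) →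
      ∃ u ∈ U, ∃ v : Fin n, (v : ℕ) + 1 = (u : ℕ) ∧ v ∉ U ∧
        (insert v (U.erase u)).card = U.card ∧
        (∑ i ∈ insert v (U.erase u), (i : ℕ)) + 1 = ∑ i ∈ U, (i : ℕ) ∧
        1 ≤ ∑ i ∈ U, (i : ℕ) := by
    intro U ⟨u, hu, v, hvu, hv⟩
    refine ⟨u, hu, v, hvu, hv, ?_, ?_, ?_⟩
    · rw [Finset.card_insert_of_notMem (fun h => hv (Finset.mem_of_mem_erase h)),
        Finset.card_erase_of_mem hu]
      have : 1 ≤ U.card := Finset.card_pos.2 ⟨u, hu⟩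
      omega
    · rw [Finset.sum_insert (fun h => hv (Finset.mem_of_mem_erase h))]
      have h2 : ∑ x ∈ U.erase u, (x : ℕ) + (u : ℕ) = ∑ x ∈ U, (x : ℕ) :=
        Finset.sum_erase_add U _ hu
      omega
    · have h1 : (u : ℕ) ≤ ∑ i ∈ U, (i : ℕ) :=
        Finset.single_le_sum (f := fun i : Fin n => (i : ℕ)) (fun _ _ => Nat.zero_le _) hu
      omega
  have noStepCase : ∀ (U W : Finset (Fin n)) (hUk : U.card = k) (hUl : Uᶜ.card = l)
      (hWk : W.card = k) (hWl : Wᶜ.card = l),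
      ¬ (∃ u ∈ U, ∃ v : Fin n, (v : ℕ) + 1 = (u : ℕ) ∧ v ∉ U) →
      ¬ (∃ u ∈ W, ∃ v : Fin n, (v : ℕ) + 1 = (u : ℕ) ∧ v ∉ W) →
      Equiv.Perm.sign ((finSumEquivOfFinset hWk hWl).symm.trans (finSumEquivOfFinset hUk hUl))
        = (-1) ^ ((∑ i ∈ U, (i : ℕ)) + (∑ j ∈ W, (j : ℕ))) := by
    intro U W hUk hUl hWk hWl hU hW
    push_neg at hU hW
    have hUW : U = W := by
      rw [noStep_eq_filter hU, noStep_eq_filter hW, hUk, hWk]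
    subst hUW
    rw [Equiv.symm_trans_self]
    have : Equiv.Perm.sign (Equiv.refl (Fin n)) = 1 := Equiv.Perm.sign_refl
    rw [this]
    exact (Even.neg_one_pow ⟨_, rfl⟩).symm
  induction N with
  | zero =>
    intro U W hUk hUl hWk hWl hN
    apply noStepCase
    · intro hs
      obtain ⟨u, hu, v, hvu, hv, _, _, h1⟩ := step U hs
      omega
    · intro hs
      obtain ⟨u, hu, v, hvu, hv, _, _, h1⟩ := step W hs
      omega
  | succ N ih =>
    intro U W hUk hUl hWk hWl hN
    by_cases hsU : ∃ u ∈ U, ∃ v : Fin n, (v : ℕ) + 1 = (u : ℕ) ∧ v ∉ U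
    · obtain ⟨u, hu, v, hvu, hv, hck, hcs, h1⟩ := step U hsU
      have hne : v ≠ u := fun h => by rw [h] at hvu; omega
      have hk' : (insert v (U.erase u)).card = k := by rw [hck, hUk]
      have hnk : n - k = l := by rw [← hUl, Finset.card_compl, Fintype.card_fin, hUk]
      have hl' : (insert v (U.erase u))ᶜ.card = l := by
        rw [Finset.card_compl, Fintype.card_fin, hck, hUk, hnk]
      rw [eqvStep hvu hu hv rfl hUk hUl hk' hl']
      have hmul : (finSumEquivOfFinset hWk hWl).symm.trans
          (((finSumEquivOfFinset hk' hl')).trans (Equiv.swap v u))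
          = Equiv.swap v u * ((finSumEquivOfFinset hWk hWl).symm.trans
            (finSumEquivOfFinset hk' hl')) := rfl
      rw [hmul, map_mul, Equiv.Perm.sign_swap hne,
        ih _ W hk' hl' hWk hWl (by omega)]
      rw [show (∑ i ∈ U, (i : ℕ)) + (∑ j ∈ W, (j : ℕ))
        = ((∑ i ∈ insert v (U.erase u), (i : ℕ)) + (∑ j ∈ W, (j : ℕ))) + 1 by omega]
      rw [pow_succ]
      exact mul_comm _ _
    · by_cases hsW : ∃ u ∈ W, ∃ v : Fin n, (v : ℕ) + 1 = (u : ℕ) ∧ v ∉ W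
      · obtain ⟨u, hu, v, hvu, hv, hck, hcs, h1⟩ := step W hsW
        have hne : v ≠ u := fun h => by rw [h] at hvu; omega
        have hk' : (insert v (W.erase u)).card = k := by rw [hck, hWk]
        have hnk : n - k = l := by rw [← hWl, Finset.card_compl, Fintype.card_fin, hWk]
        have hl' : (insert v (W.erase u))ᶜ.card = l := by
          rw [Finset.card_compl, Fintype.card_fin, hck, hWk, hnk]
        rw [eqvStep hvu hu hv rfl hWk hWl hk' hl']
        have hmul : ((finSumEquivOfFinset hk' hl').trans (Equiv.swap v u)).symm.trans
            (finSumEquivOfFinset hUk hUl)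
            = ((finSumEquivOfFinset hk' hl').symm.trans
              (finSumEquivOfFinset hUk hUl)) * Equiv.swap v u := by
          apply Equiv.ext; intro x
          simp [Equiv.trans_apply, Equiv.Perm.mul_apply]
        rw [hmul, map_mul, Equiv.Perm.sign_swap hne,
          ih U _ hUk hUl hk' hl' (by omega)]
        rw [show (∑ i ∈ U, (i : ℕ)) + (∑ j ∈ W, (j : ℕ))
          = ((∑ i ∈ U, (i : ℕ)) + (∑ j ∈ insert v (W.erase u), (j : ℕ))) + 1 by omega]
        rw [pow_succ]
      · exact noStepCase U W hUk hUl hWk hWl hsU hsW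

end Aux2
section Main
variable {n : ℕ} {R : Type*} [CommRing R]

private lemma eqv_inl_mem {s : Finset (Fin n)} {k l : ℕ} (hk : s.card = k) (hl : sᶜ.card = l)
    (i : Fin k) : finSumEquivOfFinset hk hl (Sum.inl i) ∈ s := by
  rw [finSumEquivOfFinset_inl]; exact Finset.orderEmbOfFin_mem _ _ _

private lemma eqv_inr_not_mem {s : Finset (Fin n)} {k l : ℕ} (hk : s.card = k) (hl : sᶜ.card = l)
    (j : Fin l) : finSumEquivOfFinset hk hl (Sum.inr j) ∉ s := by
  rw [finSumEquivOfFinset_inr]; exact Finset.mem_compl.1 (Finset.orderEmbOfFin_mem _ _ _)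

private lemma eqv_symm_inl {s : Finset (Fin n)} {k l : ℕ} (hk : s.card = k) (hl : sᶜ.card = l)
    {x : Fin n} (hx : x ∈ s) : ∃ i : Fin k, x = finSumEquivOfFinset hk hl (Sum.inl i) := by
  rcases h : (finSumEquivOfFinset hk hl).symm x with i | j
  · exact ⟨i, by rw [← h, Equiv.apply_symm_apply]⟩
  · exfalso
    have hx' := eqv_inr_not_mem hk hl (s := s) j
    rw [← h, Equiv.apply_symm_apply] at hx'
    exact hx' hx

private lemma lap_eq_sum_perm (X : Matrix (Fin n) (Fin n) R) (U W : Finset (Fin n)) :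
    lap X U W = ∑ τ ∈ Finset.univ.filter (fun τ : Equiv.Perm (Fin n) => W.image ⇑τ = U),
      ((Equiv.Perm.sign τ : ℤ) : R) * ∏ j, X (τ j) j := by
  by_cases hUW : U.card = W.card
  case neg =>
    have hfil : Finset.univ.filter (fun τ : Equiv.Perm (Fin n) => W.image ⇑τ = U) = ∅ := by
      rw [Finset.filter_eq_empty_iff]
      intro τ _ h
      exact hUW (by rw [← h, Finset.card_image_of_injective _ τ.injective])
    rw [hfil, Finset.sum_empty]
    unfold lap minorM
    rw [dif_neg hUW]
    ring
  case pos =>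
    have hUWc : Uᶜ.card = Wᶜ.card := by
      rw [Finset.card_compl, Finset.card_compl, hUW]
    set eU := finSumEquivOfFinset (rfl : U.card = U.card) (rfl : Uᶜ.card = Uᶜ.card) with heU
    set eW := finSumEquivOfFinset hUW.symm hUWc.symm with heW
    set F : Equiv.Perm (Fin U.card) × Equiv.Perm (Fin Uᶜ.card) → Equiv.Perm (Fin n) :=
      fun p => eW.symm.trans ((Equiv.Perm.sumCongr p.1 p.2).trans eU) with hF
    have hFappl : ∀ p : Equiv.Perm (Fin U.card) × Equiv.Perm (Fin Uᶜ.card), ∀ i : Fin U.card,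
        F p (eW (Sum.inl i)) = eU (Sum.inl (p.1 i)) := by
      intro p i
      simp [hF, Equiv.trans_apply, Equiv.symm_apply_apply]
    have hFappr : ∀ p : Equiv.Perm (Fin U.card) × Equiv.Perm (Fin Uᶜ.card), ∀ j : Fin Uᶜ.card,
        F p (eW (Sum.inr j)) = eU (Sum.inr (p.2 j)) := by
      intro p j
      simp [hF, Equiv.trans_apply, Equiv.symm_apply_apply]
    have hFim : ∀ p : Equiv.Perm (Fin U.card) × Equiv.Perm (Fin Uᶜ.card),
        W.image ⇑(F p) = U := by
      intro p
      apply Finset.eq_of_subset_of_card_le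
      · intro x hx
        rcases Finset.mem_image.1 hx with ⟨w, hw, rfl⟩
        obtain ⟨i, rfl⟩ := eqv_symm_inl hUW.symm hUWc.symm hw
        rw [hFappl]
        exact eqv_inl_mem _ _ _
      · rw [Finset.card_image_of_injective _ (F p).injective, hUW]
    have hset : Finset.univ.filter (fun τ : Equiv.Perm (Fin n) => W.image ⇑τ = U)
        = Finset.univ.image F := by
      apply Finset.Subset.antisymm
      · intro σ hσ
        obtain ⟨-, hσ⟩ := Finset.mem_filter.1 hσ
        have hmaps : Set.MapsTo ((eW.trans (σ : Fin n ≃ Fin n)).trans eU.symm)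
            (Set.range Sum.inl) (Set.range Sum.inl) := by
          rintro x ⟨i, rfl⟩
          have h1 : eW (Sum.inl i) ∈ W := eqv_inl_mem _ _ _
          have h2 : σ (eW (Sum.inl i)) ∈ U := by
            have := Finset.mem_image_of_mem ⇑σ h1
            rwa [hσ] at this
          obtain ⟨i', hi'⟩ := eqv_symm_inl (rfl : U.card = U.card) (rfl : Uᶜ.card = Uᶜ.card) h2
          refine ⟨i', ?_⟩
          show Sum.inl i' = eU.symm (σ (eW (Sum.inl i)))
          rw [hi', Equiv.symm_apply_apply]
        obtain ⟨p, hp⟩ := Equiv.Perm.mem_sumCongrHom_range_of_perm_mapsTo_inl hmaps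
        have hp' : Equiv.Perm.sumCongr p.1 p.2 = (eW.trans (σ : Fin n ≃ Fin n)).trans eU.symm := by
          rw [← Equiv.Perm.sumCongrHom_apply]; exact hp
        rw [Finset.mem_image]
        refine ⟨p, Finset.mem_univ _, ?_⟩
        apply Equiv.ext; intro x
        show eU ((Equiv.Perm.sumCongr p.1 p.2) (eW.symm x)) = σ x
        rw [hp']
        simp [Equiv.trans_apply, Equiv.apply_symm_apply]
      · intro σ hσ
        rcases Finset.mem_image.1 hσ with ⟨p, -, rfl⟩
        exact Finset.mem_filter.2 ⟨Finset.mem_univ _, hFim p⟩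
    have hinj : ∀ p ∈ Finset.univ, ∀ q ∈ Finset.univ, F p = F q → p = q := by
      intro p _ q _ hpq
      apply Equiv.Perm.sumCongrHom_injective (α := Fin U.card) (β := Fin Uᶜ.card)
      rw [Equiv.Perm.sumCongrHom_apply, Equiv.Perm.sumCongrHom_apply]
      apply Equiv.ext
      intro y
      have h1 : F p (eW y) = F q (eW y) := by rw [hpq]
      have h2 : eU ((Equiv.Perm.sumCongr p.1 p.2) y) = eU ((Equiv.Perm.sumCongr q.1 q.2) y) := by
        simpa [hF, Equiv.trans_apply, Equiv.symm_apply_apply] using h1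
      exact eU.injective h2
    rw [hset, Finset.sum_image hinj]
    unfold lap minorM
    rw [dif_pos hUW, dif_pos hUWc, Matrix.det_apply, Matrix.det_apply,
      Finset.sum_mul_sum, Finset.mul_sum, Fintype.sum_prod_type]
    refine Finset.sum_congr rfl fun π _ => ?_
    rw [Finset.mul_sum]
    refine Finset.sum_congr rfl fun ρ _ => ?_
    -- per-term equality
    have hsign : Equiv.Perm.sign (F (π, ρ))
        = Equiv.Perm.sign (eW.symm.trans eU) * (Equiv.Perm.sign π * Equiv.Perm.sign ρ) := by
      have hdecomp : F (π, ρ) = (eW.symm.trans eU) * (eW.permCongr (Equiv.Perm.sumCongr π ρ)) := by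
        apply Equiv.ext; intro x
        simp [hF, Equiv.permCongr_apply, Equiv.Perm.mul_apply, Equiv.trans_apply,
          Equiv.symm_apply_apply]
      rw [hdecomp, map_mul, Equiv.Perm.sign_permCongr, Equiv.Perm.sign_sumCongr]
    have hsign0 : Equiv.Perm.sign (eW.symm.trans eU)
        = (-1 : ℤˣ) ^ ((∑ i ∈ U, (i : ℕ)) + (∑ j ∈ W, (j : ℕ))) :=
      signLemma _ U W rfl rfl hUW.symm hUWc.symm le_rfl
    have hprod : (∏ j, X (F (π, ρ) j) j)
        = (∏ i, (Matrix.of fun i j : Fin U.card =>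
              X (U.orderEmbOfFin rfl i) (W.orderEmbOfFin hUW.symm j)) (π i) i)
          * (∏ j, (Matrix.of fun i j : Fin Uᶜ.card =>
              X (Uᶜ.orderEmbOfFin rfl i) (Wᶜ.orderEmbOfFin hUWc.symm j)) (ρ j) j) := by
      rw [← Equiv.prod_comp eW (fun j => X (F (π, ρ) j) j), Fintype.prod_sum_type]
      congr 1
      · refine Finset.prod_congr rfl fun i _ => ?_
        rw [hFappl (π, ρ) i]
        show X (eU (Sum.inl (π i))) (eW (Sum.inl i)) = _
        rw [heU, heW, finSumEquivOfFinset_inl, finSumEquivOfFinset_inl, Matrix.of_apply]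
      · refine Finset.prod_congr rfl fun j _ => ?_
        rw [hFappr (π, ρ) j]
        show X (eU (Sum.inr (ρ j))) (eW (Sum.inr j)) = _
        rw [heU, heW, finSumEquivOfFinset_inr, finSumEquivOfFinset_inr, Matrix.of_apply]
    have hE : (∑ i ∈ U, ((i : ℕ) + 1) + ∑ j ∈ W, ((j : ℕ) + 1))
        = ((∑ i ∈ U, (i : ℕ)) + (∑ j ∈ W, (j : ℕ))) + 2 * U.card := by
      rw [Finset.sum_add_distrib, Finset.sum_add_distrib, Finset.sum_const, Finset.sum_const,
        smul_eq_mul, smul_eq_mul, mul_one, mul_one, hUW]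
      ring
    rw [hprod, hsign, hsign0, hE, pow_add, pow_mul, neg_one_sq, one_pow, mul_one]
    simp only [Units.smul_def, zsmul_eq_mul, Units.val_mul, Units.val_pow_eq_pow_val,
      Units.val_neg, Units.val_one, Int.cast_mul, Int.cast_pow, Int.cast_neg, Int.cast_one]
    ring

end Main
section Final
variable {n : ℕ} {R : Type*} [CommRing R]

private lemma union_eq_univ_iff {α : Type*} [Fintype α] [DecidableEq α] (s t : Finset α) :
    s ∪ t = Finset.univ ↔ tᶜ ⊆ s := by
  constructor
  · intro h x hx
    rcases Finset.mem_union.1 (h ▸ Finset.mem_univ x) with h1 | h1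
    · exact h1
    · exact absurd h1 (Finset.mem_compl.1 hx)
  · intro h
    apply Finset.eq_univ_of_forall
    intro x
    by_cases hx : x ∈ t
    · exact Finset.mem_union_right _ hx
    · exact Finset.mem_union_left _ (h (Finset.mem_compl.2 hx))

private lemma subset_image_iff' {α : Type*} [DecidableEq α] (e : Equiv.Perm α)
    (A W : Finset α) : A ⊆ W.image ⇑e ↔ A.image ⇑e.symm ⊆ W := by
  rw [Finset.image_subset_iff]
  constructor
  · intro h a ha
    obtain ⟨w, hw, hwe⟩ := Finset.mem_image.1 (h ha)
    rw [← hwe, Equiv.symm_apply_apply]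
    exact hw
  · intro h a ha
    exact Finset.mem_image.2 ⟨e.symm a, h a ha, Equiv.apply_symm_apply e a⟩

private lemma image_eq_iff' {α : Type*} [DecidableEq α] (e : Equiv.Perm α)
    (s t : Finset α) : s.image ⇑e = t ↔ s = t.image ⇑e.symm := by
  constructor
  · rintro rfl
    ext x
    simp
  · rintro rfl
    ext x
    simp

private lemma sum_superset_sign {α : Type*} [Fintype α] [DecidableEq α] (C : Finset α) :
    ∑ W ∈ Finset.univ.filter (fun W : Finset α => C ⊆ W), (-1 : R) ^ Wᶜ.card
      = if C = Finset.univ then 1 else 0 := by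
  have h1 : ∑ W ∈ Finset.univ.filter (fun W : Finset α => C ⊆ W), (-1 : R) ^ Wᶜ.card
      = ∑ S ∈ Cᶜ.powerset, (-1 : R) ^ S.card := by
    refine Finset.sum_nbij' (fun W => Wᶜ) (fun S => Sᶜ) ?_ ?_ ?_ ?_ ?_
    · intro W hW
      rw [Finset.mem_powerset]
      exact Finset.compl_subset_compl.2 ((Finset.mem_filter.1 hW).2)
    · intro S hS
      rw [Finset.mem_filter]
      refine ⟨Finset.mem_univ _, ?_⟩
      intro x hx
      rw [Finset.mem_compl]
      intro hxS
      exact absurd hx (Finset.mem_compl.1 (Finset.mem_powerset.1 hS hxS))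
    · intro W _; exact compl_compl W
    · intro S _; exact compl_compl S
    · intro W _; rfl
  rw [h1]
  have h2 : ∑ S ∈ Cᶜ.powerset, (-1 : R) ^ S.card
      = (((∑ S ∈ Cᶜ.powerset, (-1 : ℤ) ^ S.card) : ℤ) : R) := by
    push_cast
    rfl
  rw [h2, Finset.sum_powerset_neg_one_pow_card]
  have h3 : Cᶜ = ∅ ↔ C = Finset.univ := by
    constructor
    · intro h
      rw [← compl_compl C, h, compl_empty]
    · intro h
      rw [h, compl_univ]
  split_ifs with ha hb hb
  · norm_num
  · exact absurd (h3.1 ha) hb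
  · exact absurd (h3.2 hb) ha
  · norm_num

end Final

/-- Corollary 2: `Σ_{U ⊇ A, W ⊇ B} (-1)^{|W̃|} X{U|W} = Σ_{V ⊆ B} X{A|Ṽ}`. -/
theorem statement7 {n : ℕ} {R : Type*} [CommRing R] (X : Matrix (Fin n) (Fin n) R)
    (A B : Finset (Fin n)) :
    ∑ U ∈ Finset.univ.filter (fun U : Finset (Fin n) => A ⊆ U),
      ∑ W ∈ Finset.univ.filter (fun W : Finset (Fin n) => B ⊆ W),
        (-1 : R) ^ Wᶜ.card * lap X U W =
      ∑ V ∈ B.powerset, lap X A Vᶜ := by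
  classical
  have hL : (∑ U ∈ Finset.univ.filter (fun U : Finset (Fin n) => A ⊆ U),
      ∑ W ∈ Finset.univ.filter (fun W : Finset (Fin n) => B ⊆ W),
        (-1 : R) ^ Wᶜ.card * lap X U W)
      = ∑ τ : Equiv.Perm (Fin n), if (A.image ⇑τ.symm)ᶜ ⊆ B then
          ((Equiv.Perm.sign τ : ℤ) : R) * ∏ j, X (τ j) j else 0 := by
    rw [Finset.sum_comm]
    have inner1 : ∀ W ∈ Finset.univ.filter (fun W : Finset (Fin n) => B ⊆ W),
        (∑ U ∈ Finset.univ.filter (fun U : Finset (Fin n) => A ⊆ U),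
          (-1 : R) ^ Wᶜ.card * lap X U W)
        = ∑ τ : Equiv.Perm (Fin n), if A.image ⇑τ.symm ⊆ W then
            (-1 : R) ^ Wᶜ.card * (((Equiv.Perm.sign τ : ℤ) : R) * ∏ j, X (τ j) j) else 0 := by
      intro W _
      rw [← Finset.mul_sum]
      have h0 : (∑ U ∈ Finset.univ.filter (fun U : Finset (Fin n) => A ⊆ U), lap X U W)
          = ∑ τ : Equiv.Perm (Fin n), if A.image ⇑τ.symm ⊆ W then
              (((Equiv.Perm.sign τ : ℤ) : R) * ∏ j, X (τ j) j) else 0 := by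
        have e1 : ∀ U ∈ Finset.univ.filter (fun U : Finset (Fin n) => A ⊆ U), lap X U W
            = ∑ τ : Equiv.Perm (Fin n), if W.image ⇑τ = U then
                (((Equiv.Perm.sign τ : ℤ) : R) * ∏ j, X (τ j) j) else 0 := by
          intro U _
          rw [lap_eq_sum_perm, Finset.sum_filter]
        rw [Finset.sum_congr rfl e1, Finset.sum_comm]
        refine Finset.sum_congr rfl fun τ _ => ?_
        rw [Finset.sum_filter]
        have e2 : ∀ U : Finset (Fin n),
            (if A ⊆ U then (if W.image ⇑τ = U then
                (((Equiv.Perm.sign τ : ℤ) : R) * ∏ j, X (τ j) j) else 0) else 0)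
            = (if W.image ⇑τ = U then (if A ⊆ U then
                (((Equiv.Perm.sign τ : ℤ) : R) * ∏ j, X (τ j) j) else 0) else 0) := by
          intro U
          split_ifs <;> rfl
        rw [Finset.sum_congr rfl fun U _ => e2 U, Finset.sum_ite_eq]
        simp only [Finset.mem_univ, if_true]
        simp only [subset_image_iff']
      rw [h0, Finset.mul_sum]
      refine Finset.sum_congr rfl fun τ _ => ?_
      rw [mul_ite, mul_zero]
    rw [Finset.sum_congr rfl inner1, Finset.sum_comm]
    refine Finset.sum_congr rfl fun τ _ => ?_
    rw [← Finset.sum_filter, Finset.filter_filter]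
    have efil : Finset.filter (fun W : Finset (Fin n) => B ⊆ W ∧ A.image ⇑τ.symm ⊆ W)
          Finset.univ
        = Finset.filter (fun W : Finset (Fin n) => B ∪ A.image ⇑τ.symm ⊆ W) Finset.univ := by
      apply Finset.filter_congr
      intro W _
      simp [Finset.union_subset_iff]
    rw [efil, ← Finset.sum_mul, sum_superset_sign]
    simp only [union_eq_univ_iff, ite_mul, one_mul, zero_mul]
  have hR : (∑ V ∈ B.powerset, lap X A Vᶜ)
      = ∑ τ : Equiv.Perm (Fin n), if (A.image ⇑τ.symm)ᶜ ⊆ B then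
          ((Equiv.Perm.sign τ : ℤ) : R) * ∏ j, X (τ j) j else 0 := by
    have e1 : ∀ V ∈ B.powerset, lap X A Vᶜ
        = ∑ τ : Equiv.Perm (Fin n), if Vᶜ.image ⇑τ = A then
            (((Equiv.Perm.sign τ : ℤ) : R) * ∏ j, X (τ j) j) else 0 := by
      intro V _
      rw [lap_eq_sum_perm, Finset.sum_filter]
    rw [Finset.sum_congr rfl e1, Finset.sum_comm]
    refine Finset.sum_congr rfl fun τ _ => ?_
    have e2 : ∀ V : Finset (Fin n),
        (if Vᶜ.image ⇑τ = A then (((Equiv.Perm.sign τ : ℤ) : R) * ∏ j, X (τ j) j) else 0)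
        = (if V = (A.image ⇑τ.symm)ᶜ then
            (((Equiv.Perm.sign τ : ℤ) : R) * ∏ j, X (τ j) j) else 0) := by
      intro V
      have hiff : (Vᶜ.image ⇑τ = A) ↔ (V = (A.image ⇑τ.symm)ᶜ) := by
        rw [image_eq_iff']
        constructor
        · intro h
          rw [← h, compl_compl]
        · intro h
          rw [h, compl_compl]
      simp only [hiff]
    rw [Finset.sum_congr rfl fun V _ => e2 V, Finset.sum_ite_eq']
    simp only [Finset.mem_powerset]
  exact hL.trans hR.symm
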